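/- For every statistics parameter α ∈ [0,1], the two-anyon Neumann energy on the unit square satisfies E^N_2(α) ≤ 2π². -/

import Mathlib

noncomputable section

open MeasureTheory Real Set
open scoped BigOperators Topology

/-- The plane `ℝ²`, with points written as pairs. -/
abbrev Plane : Type := ℝ × ℝ

/-- Configuration space of `N` particles in the plane. -/
abbrev Config (N : ℕ) : Type := Fin N → Plane

/-- `x^{-⊥} := (-y, x)/(x² + y²)` for `x = (x, y) ∈ ℝ²`. -/
def perpInv (v : Plane) : Plane :=
  (-v.2 / (v.1 ^ 2 + v.2 ^ 2), v.1 / (v.1 ^ 2 + v.2 ^ 2))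

/-- The Aharonov–Bohm potential `A_j(x) = ∑_{k ≠ j} (x_j - x_k)^{-⊥}`. -/
def abPot (N : ℕ) (j : Fin N) (x : Config N) : Plane :=
  ∑ k ∈ Finset.univ.erase j, perpInv (x j - x k)

/-- Partial derivative of `Ψ` at `x` in direction `v` of the `j`-th particle. -/
def pder (N : ℕ) (j : Fin N) (v : Plane) (Ψ : Config N → ℂ) (x : Config N) : ℂ :=
  fderiv ℝ Ψ x (Pi.single j v)

/-- The two components of `D_j Ψ = -i ∇_{x_j} Ψ + α A_j Ψ` at `x`. -/
def DOp (N : ℕ) (α : ℝ) (j : Fin N) (Ψ : Config N → ℂ) (x : Config N) : ℂ × ℂ :=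
  (-Complex.I * pder N j (1, 0) Ψ x + Complex.ofReal (α * (abPot N j x).1) * Ψ x,
   -Complex.I * pder N j (0, 1) Ψ x + Complex.ofReal (α * (abPot N j x).2) * Ψ x)

/-- `|D_j Ψ(x)|²`, the squared Euclidean norm of the vector `D_j Ψ(x) ∈ ℂ²`. -/
def DSq (N : ℕ) (α : ℝ) (j : Fin N) (Ψ : Config N → ℂ) (x : Config N) : ℝ :=
  ‖(DOp N α j Ψ x).1‖ ^ 2 + ‖(DOp N α j Ψ x).2‖ ^ 2

/-- The diagonal set `{x : x_j = x_k for some j ≠ k}`. -/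
def diagSet (N : ℕ) : Set (Config N) := {x | ∃ j k : Fin N, j ≠ k ∧ x j = x k}

/-- Admissible wave functions: smooth, symmetric, vanishing on a neighbourhood of
the diagonal set. -/
structure Admissible (N : ℕ) (Ψ : Config N → ℂ) : Prop where
  smooth : ContDiff ℝ (⊤ : ℕ∞) Ψ
  symm : ∀ (σ : Equiv.Perm (Fin N)) (x : Config N), Ψ (x ∘ σ) = Ψ x
  vanishes : ∃ U : Set (Config N), IsOpen U ∧ diagSet N ⊆ U ∧ ∀ x ∈ U, Ψ x = 0

/-- `Ω^N` as a subset of configuration space. -/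
def cube (N : ℕ) (Ω : Set Plane) : Set (Config N) := Set.univ.pi fun _ => Ω

/-- Total kinetic energy `∑_j ∫_{Ω^N} |D_j Ψ|²`. -/
def kinE (N : ℕ) (α : ℝ) (Ω : Set Plane) (Ψ : Config N → ℂ) : ℝ :=
  ∑ j, ∫ x in cube N Ω, DSq N α j Ψ x

/-- `∫_{Ω^N} |Ψ|²`. -/
def normSq (N : ℕ) (Ω : Set Plane) (Ψ : Config N → ℂ) : ℝ :=
  ∫ x in cube N Ω, ‖Ψ x‖ ^ 2

/-- Neumann ground-state energy of `N` anyons with statistics parameter `α` on `Ω`,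
with the convention that it is `0` for `N = 0`. -/
def neumannE (N : ℕ) (α : ℝ) (Ω : Set Plane) : ℝ :=
  if N = 0 then 0 else
    sInf {E | ∃ Ψ : Config N → ℂ, Admissible N Ψ ∧ normSq N Ω Ψ = 1 ∧ E = kinE N α Ω Ψ}

/-- Dirichlet ground-state energy of `N` anyons with statistics parameter `α` on `Ω`. -/
def dirichletE (N : ℕ) (α : ℝ) (Ω : Set Plane) : ℝ :=
  sInf {E | ∃ Ψ : Config N → ℂ, Admissible N Ψ ∧ IsCompact (tsupport Ψ) ∧
    tsupport Ψ ⊆ cube N Ω ∧ normSq N Ω Ψ = 1 ∧ E = kinE N α Ω Ψ}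

/-- The open unit square `Q₀ = (0,1)²`. -/
def Q0 : Set Plane := Set.Ioo (0 : ℝ) 1 ×ˢ Set.Ioo (0 : ℝ) 1

/-- `E^N_N(α)`, the Neumann energy on the unit square. -/
def EN (N : ℕ) (α : ℝ) : ℝ := neumannE N α Q0

/-- `E^D_N(α)`, the Dirichlet energy on the unit square. -/
def ED (N : ℕ) (α : ℝ) : ℝ := dirichletE N α Q0

/-- One-particle density `ρ_Ψ` of a wave function of `n+1` particles. -/
def density (n : ℕ) (Ψ : Config (n + 1) → ℂ) (y : Plane) : ℝ :=
  (n + 1) * ∫ z : Config n, ‖Ψ (Fin.cons y z)‖ ^ 2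

namespace AnyonProof

def eps : ℝ := 1/1000
lemma eps_pos : (0:ℝ) < eps := by norm_num [eps]

noncomputable def cut (t : ℝ) : ℝ := Real.smoothTransition ((t - eps)/eps)

lemma cut_nonneg (t : ℝ) : 0 ≤ cut t := Real.smoothTransition.nonneg _
lemma cut_le_one (t : ℝ) : cut t ≤ 1 := Real.smoothTransition.le_one _
lemma cut_eq_zero {t : ℝ} (h : t ≤ eps) : cut t = 0 :=
  Real.smoothTransition.zero_of_nonpos (by
    apply div_nonpos_of_nonpos_of_nonneg <;> [linarith; exact eps_pos.le])
lemma cut_eq_one {t : ℝ} (h : 2*eps ≤ t) : cut t = 1 :=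
  Real.smoothTransition.one_of_one_le (by
    rw [le_div_iff₀ eps_pos]; linarith)
lemma contDiff_cut : ContDiff ℝ (⊤ : ℕ∞) cut :=
  Real.smoothTransition.contDiff.comp ((contDiff_id.sub contDiff_const).div_const _)
lemma continuous_cut : Continuous cut := contDiff_cut.continuous

noncomputable def F (t : ℝ) : ℝ := ∫ s in (0:ℝ)..t, cut s

lemma hasDerivAt_F (t : ℝ) : HasDerivAt F (cut t) t :=
  intervalIntegral.integral_hasDerivAt_right
    (continuous_cut.intervalIntegrable _ _)
    (continuous_cut.stronglyMeasurableAtFilter _ _)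
    continuous_cut.continuousAt

lemma contDiff_F : ContDiff ℝ (⊤ : ℕ∞) F := by
  rw [contDiff_infty_iff_deriv]
  refine ⟨fun t => (hasDerivAt_F t).differentiableAt, ?_⟩
  have : deriv F = cut := funext fun t => (hasDerivAt_F t).deriv
  rw [this]; exact contDiff_cut

lemma F_eq_zero {t : ℝ} (h : t ≤ eps) : F t = 0 := by
  rw [F, intervalIntegral.integral_congr (g := fun _ => (0:ℝ)), intervalIntegral.integral_zero]
  intro s hs
  exact cut_eq_zero (le_trans hs.2 (sup_le eps_pos.le h))



lemma F_nonneg {t : ℝ} (h : 0 ≤ t) : 0 ≤ F t :=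
  intervalIntegral.integral_nonneg h (fun u _ => cut_nonneg u)

lemma F_le {t : ℝ} (h : 0 ≤ t) : F t ≤ t := by
  have := intervalIntegral.integral_mono_on h (continuous_cut.intervalIntegrable 0 t)
    (intervalIntegrable_const (μ := volume) (c := (1:ℝ))) (fun u _ => cut_le_one u)
  simpa [F] using this

lemma F_ge {t : ℝ} (h : 2*eps ≤ t) : t - 2*eps ≤ F t := by
  have hsplit : (∫ s in (0:ℝ)..(2*eps), cut s) + (∫ s in (2*eps)..t, cut s) = F t :=
    intervalIntegral.integral_add_adjacent_intervals
      (continuous_cut.intervalIntegrable _ _) (continuous_cut.intervalIntegrable _ _)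
  have h1 : 0 ≤ ∫ s in (0:ℝ)..(2*eps), cut s :=
    intervalIntegral.integral_nonneg (by norm_num [eps]) (fun u _ => cut_nonneg u)
  have h2 : (∫ s in (2*eps)..t, cut s) = t - 2*eps := by
    rw [intervalIntegral.integral_congr (g := fun _ => (1:ℝ))]
    · simp
    · intro s hs
      rw [Set.uIcc_of_le h] at hs
      exact cut_eq_one hs.1
  linarith

/-- coordinate difference CLMs -/
def A1 : Config 2 →L[ℝ] ℝ :=
  (ContinuousLinearMap.fst ℝ ℝ ℝ).comp (ContinuousLinearMap.proj (R := ℝ) (φ := fun _ : Fin 2 => Plane) 0)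
  - (ContinuousLinearMap.fst ℝ ℝ ℝ).comp (ContinuousLinearMap.proj 1)
def A2 : Config 2 →L[ℝ] ℝ :=
  (ContinuousLinearMap.snd ℝ ℝ ℝ).comp (ContinuousLinearMap.proj (R := ℝ) (φ := fun _ : Fin 2 => Plane) 0)
  - (ContinuousLinearMap.snd ℝ ℝ ℝ).comp (ContinuousLinearMap.proj 1)

lemma A1_apply (x : Config 2) : A1 x = (x 0).1 - (x 1).1 := rfl
lemma A2_apply (x : Config 2) : A2 x = (x 0).2 - (x 1).2 := rfl

def sfun (x : Config 2) : ℝ := ((x 0).1 - (x 1).1)^2 + ((x 0).2 - (x 1).2)^2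

lemma sfun_eq (x : Config 2) : sfun x = (A1 x)^2 + (A2 x)^2 := rfl

lemma hasFDerivAt_sfun (x : Config 2) :
    HasFDerivAt sfun ((2 * A1 x) • (A1 : Config 2 →L[ℝ] ℝ) + (2 * A2 x) • A2) x := by
  have h1 : HasFDerivAt (fun x => (A1 x)^2) ((2 * A1 x) • (A1 : Config 2 →L[ℝ] ℝ)) x := by
    have h := (hasDerivAt_pow 2 (A1 x)).comp_hasFDerivAt x (A1.hasFDerivAt)
    simp at h
    exact h
  have h2 : HasFDerivAt (fun x => (A2 x)^2) ((2 * A2 x) • (A2 : Config 2 →L[ℝ] ℝ)) x := by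
    have h := (hasDerivAt_pow 2 (A2 x)).comp_hasFDerivAt x (A2.hasFDerivAt)
    simp at h
    exact h
  exact h1.add h2

noncomputable def Psi0 (x : Config 2) : ℂ := (F (sfun x) : ℂ)

lemma hasFDerivAt_Psi0 (x : Config 2) :
    HasFDerivAt Psi0 (Complex.ofRealCLM.comp
      ((cut (sfun x)) • ((2 * A1 x) • (A1 : Config 2 →L[ℝ] ℝ) + (2 * A2 x) • A2))) x := by
  have h : HasFDerivAt (fun x => F (sfun x))
      ((cut (sfun x)) • ((2 * A1 x) • (A1 : Config 2 →L[ℝ] ℝ) + (2 * A2 x) • A2)) x :=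
    (hasDerivAt_F (sfun x)).comp_hasFDerivAt x (hasFDerivAt_sfun x)
  exact Complex.ofRealCLM.hasFDerivAt.comp x h

lemma smooth_Psi0 : ContDiff ℝ (⊤ : ℕ∞) Psi0 := by
  have hs : ContDiff ℝ (⊤ : ℕ∞) sfun := by
    rw [show sfun = (fun x => (A1 x)^2 + (A2 x)^2) from rfl]
    exact (A1.contDiff.pow 2).add (A2.contDiff.pow 2)
  exact Complex.ofRealCLM.contDiff.comp (contDiff_F.comp hs)

lemma pder_vals (x : Config 2) :
    pder 2 0 (1,0) Psi0 x = Complex.ofReal (cut (sfun x) * (2 * A1 x))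
    ∧ pder 2 0 (0,1) Psi0 x = Complex.ofReal (cut (sfun x) * (2 * A2 x))
    ∧ pder 2 1 (1,0) Psi0 x = Complex.ofReal (cut (sfun x) * (-(2 * A1 x)))
    ∧ pder 2 1 (0,1) Psi0 x = Complex.ofReal (cut (sfun x) * (-(2 * A2 x))) := by
  have hd := (hasFDerivAt_Psi0 x).fderiv
  refine ⟨?_, ?_, ?_, ?_⟩ <;>
  · rw [pder, hd]
    simp [A1, A2, Pi.single_apply]


lemma abPot_zero (x : Config 2) : abPot 2 0 x = perpInv (x 0 - x 1) := by
  rw [abPot]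
  rw [show (Finset.univ.erase (0 : Fin 2)) = {1} from by decide]
  simp

lemma abPot_one (x : Config 2) : abPot 2 1 x = perpInv (x 1 - x 0) := by
  rw [abPot]
  rw [show (Finset.univ.erase (1 : Fin 2)) = {0} from by decide]
  simp

lemma norm_helper (r q : ℝ) : ‖-Complex.I * (r:ℂ) + (q:ℂ)‖^2 = r^2 + q^2 := by
  have : ‖-Complex.I * (r:ℂ) + (q:ℂ)‖^2 = Complex.normSq (-Complex.I * (r:ℂ) + (q:ℂ)) := by
    rw [Complex.sq_norm]
  rw [this]
  simp [Complex.normSq_apply]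
  ring


lemma sfun_nonneg (x : Config 2) : 0 ≤ sfun x := by
  rw [sfun_eq]; positivity

lemma perp01 (x : Config 2) : perpInv (x 0 - x 1) = (-(A2 x)/sfun x, A1 x/sfun x) := by
  simp only [perpInv, Prod.fst_sub, Prod.snd_sub, A1_apply, A2_apply, sfun]

lemma perp10 (x : Config 2) : perpInv (x 1 - x 0) = (A2 x/sfun x, -(A1 x)/sfun x) := by
  simp only [perpInv, Prod.fst_sub, Prod.snd_sub, sfun, A1_apply, A2_apply]
  refine Prod.ext ?_ ?_ <;> · show _ = _ ; ring

lemma key_bound {α S Fs c : ℝ} (h0 : 0 ≤ α) (h1 : α ≤ 1) (hc0 : 0 ≤ c) (hc1 : c ≤ 1)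
    (hF0 : 0 ≤ Fs) (hFle : Fs ≤ S) (u v : ℝ) (huv : S = u^2 + v^2) :
    (c * (2*u))^2 + (α * (-v/S) * Fs)^2
      + ((c * (2*v))^2 + (α * (u/S) * Fs)^2) ≤ 5 * S := by
  have hS0 : 0 ≤ S := by rw [huv]; positivity
  rcases eq_or_lt_of_le hS0 with hz | hpos
  · have hu : u = 0 := by nlinarith [sq_nonneg u, sq_nonneg v]
    have hv : v = 0 := by nlinarith [sq_nonneg u, sq_nonneg v]
    have hFs : Fs = 0 := le_antisymm (by linarith) hF0
    simp [hu, hv, hFs, ← hz]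
  · have hα2 : α^2 ≤ 1 := by nlinarith
    have hFs2 : Fs^2 ≤ S^2 := by nlinarith
    have e1 : (α * (-v/S) * Fs)^2 + (α * (u/S) * Fs)^2
        = α^2 * Fs^2 * (u^2+v^2) / S^2 := by
      field_simp; ring
    have e2 : α^2 * Fs^2 * (u^2+v^2) / S^2 ≤ S := by
      rw [← huv, div_le_iff₀ (by positivity)]
      have : α^2 * Fs^2 ≤ 1 * S^2 := mul_le_mul hα2 hFs2 (sq_nonneg Fs) zero_le_one
      nlinarith
    have e3 : (c * (2*u))^2 + (c * (2*v))^2 ≤ 4 * S := by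
      have h4 : (c * (2*u))^2 + (c * (2*v))^2 = 4 * c^2 * (u^2+v^2) := by ring
      rw [h4, ← huv]
      nlinarith [mul_le_one₀ hc1 hc0 hc1]
    linarith [e1 ▸ e2]

lemma DSq0_le {α : ℝ} (hα : α ∈ Set.Icc (0:ℝ) 1) (x : Config 2) :
    DSq 2 α 0 Psi0 x ≤ 5 * sfun x := by
  have hp := pder_vals x
  simp only [DSq, DOp, hp.1, hp.2.1, abPot_zero, perp01]
  rw [show Psi0 x = ((F (sfun x) : ℝ) : ℂ) from rfl]
  rw [← Complex.ofReal_mul, ← Complex.ofReal_mul, norm_helper, norm_helper]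
  have := key_bound hα.1 hα.2 (cut_nonneg (sfun x)) (cut_le_one (sfun x))
    (F_nonneg (sfun_nonneg x)) (F_le (sfun_nonneg x))
    (A1 x) (A2 x) (sfun_eq x)
  exact this

lemma DSq1_le {α : ℝ} (hα : α ∈ Set.Icc (0:ℝ) 1) (x : Config 2) :
    DSq 2 α 1 Psi0 x ≤ 5 * sfun x := by
  have hp := pder_vals x
  simp only [DSq, DOp, hp.2.2.1, hp.2.2.2, abPot_one, perp10]
  rw [show Psi0 x = ((F (sfun x) : ℝ) : ℂ) from rfl]
  rw [← Complex.ofReal_mul, ← Complex.ofReal_mul, norm_helper, norm_helper]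
  have := key_bound hα.1 hα.2 (cut_nonneg (sfun x)) (cut_le_one (sfun x))
    (F_nonneg (sfun_nonneg x)) (F_le (sfun_nonneg x))
    (-(A1 x)) (-(A2 x)) (by rw [sfun_eq]; ring)
  convert this using 2 <;> ring



lemma fin_two (i : Fin 2) : i = 0 ∨ i = 1 := by omega

lemma sfun_symm (σ : Equiv.Perm (Fin 2)) (x : Config 2) : sfun (x ∘ σ) = sfun x := by
  have hne : σ 1 ≠ σ 0 := fun h => absurd (σ.injective h) (by decide)
  rcases fin_two (σ 0) with h0 | h0
  · have h1 : σ 1 = 1 := by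
      rcases fin_two (σ 1) with h | h
      · rw [h0] at hne; exact absurd h hne
      · exact h
    simp [sfun, Function.comp, h0, h1]
  · have h1 : σ 1 = 0 := by
      rcases fin_two (σ 1) with h | h
      · exact h
      · rw [h0] at hne; exact absurd h hne
    simp only [sfun, Function.comp, h0, h1]
    ring

lemma continuous_sfun : Continuous sfun := by
  rw [show sfun = (fun x => (A1 x)^2 + (A2 x)^2) from rfl]
  exact (A1.continuous.pow 2).add (A2.continuous.pow 2)

lemma Psi0_symm (σ : Equiv.Perm (Fin 2)) (x : Config 2) : Psi0 (x ∘ σ) = Psi0 x := by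
  rw [Psi0, Psi0, sfun_symm]

lemma Psi0_vanishes : ∃ U : Set (Config 2), IsOpen U ∧ diagSet 2 ⊆ U ∧ ∀ x ∈ U, Psi0 x = 0 := by
  refine ⟨sfun ⁻¹' Set.Iio eps, continuous_sfun.isOpen_preimage _ isOpen_Iio, ?_, ?_⟩
  · rintro x ⟨j, k, hjk, hx⟩
    have hx01 : x 0 = x 1 := by
      rcases fin_two j with hj | hj <;> rcases fin_two k with hk | hk <;>
        first
          | (exact absurd (hj.trans hk.symm) hjk)
          | (rw [hj, hk] at hx; exact hx)
          | (rw [hj, hk] at hx; exact hx.symm)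
    simp only [Set.mem_preimage, Set.mem_Iio, sfun, hx01]
    norm_num [eps]
  · intro x hx
    rw [Psi0, F_eq_zero (le_of_lt hx), Complex.ofReal_zero]

lemma Psi0_admissible : Admissible 2 Psi0 :=
  ⟨smooth_Psi0, Psi0_symm, Psi0_vanishes⟩


lemma intOn_real {g : ℝ → ℝ} (hg : Continuous g) : IntegrableOn g (Set.Ioo (0:ℝ) 1) :=
  (hg.continuousOn.integrableOn_compact isCompact_Icc).mono_set Set.Ioo_subset_Icc_self

lemma intOn_plane {g : Plane → ℝ} (hg : Continuous g) : IntegrableOn g Q0 :=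
  ((hg.continuousOn.integrableOn_compact ((isCompact_Icc (α := ℝ)).prod isCompact_Icc))).mono_set
    (Set.prod_mono Set.Ioo_subset_Icc_self Set.Ioo_subset_Icc_self)

lemma intOn_plane2 {g : Plane × Plane → ℝ} (hg : Continuous g) : IntegrableOn g (Q0 ×ˢ Q0) :=
  ((hg.continuousOn.integrableOn_compact
      (((isCompact_Icc (α := ℝ)).prod isCompact_Icc).prod
        ((isCompact_Icc (α := ℝ)).prod isCompact_Icc)))).mono_set
    (Set.prod_mono (Set.prod_mono Set.Ioo_subset_Icc_self Set.Ioo_subset_Icc_self)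
      (Set.prod_mono Set.Ioo_subset_Icc_self Set.Ioo_subset_Icc_self))

lemma my_setIntegral_prod {X Y : Type*} [MeasureSpace X] [MeasureSpace Y]
    [SigmaFinite (volume : Measure X)] [SigmaFinite (volume : Measure Y)]
    (f : X × Y → ℝ) {s : Set X} {t : Set Y} (hf : IntegrableOn f (s ×ˢ t)) :
    ∫ z in s ×ˢ t, f z = ∫ x in s, ∫ y in t, f (x, y) := by
  rw [Measure.volume_eq_prod] at hf ⊢
  exact setIntegral_prod f hf

lemma cube_preimage : cube 2 Q0 = (MeasurableEquiv.piFinTwo fun _ => Plane) ⁻¹' (Q0 ×ˢ Q0) := by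
  ext x
  simp [cube, Set.mem_pi, Fin.forall_fin_two, MeasurableEquiv.piFinTwo_apply]

lemma integral_cube (f : Plane × Plane → ℝ) :
    ∫ x in cube 2 Q0, f (x 0, x 1) = ∫ p in Q0 ×ˢ Q0, f p := by
  rw [cube_preimage]
  exact (volume_preserving_piFinTwo fun _ => Plane).setIntegral_preimage_emb
    (MeasurableEquiv.measurableEmbedding _) f _

lemma ioo_eq_int (g : ℝ → ℝ) : ∫ y in Set.Ioo (0:ℝ) 1, g y = ∫ y in (0:ℝ)..1, g y := by
  rw [intervalIntegral.integral_of_le zero_le_one, integral_Ioc_eq_integral_Ioo]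

lemma integral_cube_eq (f : Plane × Plane → ℝ) (hf : Continuous f) :
    ∫ x in cube 2 Q0, f (x 0, x 1)
    = ∫ u0 in (0:ℝ)..1, ∫ w0 in (0:ℝ)..1, ∫ u1 in (0:ℝ)..1, ∫ w1 in (0:ℝ)..1,
        f ((u0,w0),(u1,w1)) := by
  rw [integral_cube, my_setIntegral_prod f (intOn_plane2 hf)]
  have hG : IntegrableOn (fun p1 : Plane => ∫ p2 in Q0, f (p1, p2)) Q0 := by
    have h := (intOn_plane2 hf)
    rw [IntegrableOn, Measure.volume_eq_prod, ← Measure.prod_restrict] at h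
    exact h.integral_prod_left
  rw [show (∫ p1 in Q0, ∫ p2 in Q0, f (p1, p2))
      = ∫ p1 in (Set.Ioo (0:ℝ) 1 ×ˢ Set.Ioo (0:ℝ) 1), (fun q => ∫ p2 in Q0, f (q, p2)) p1
      from rfl,
    my_setIntegral_prod _ hG]
  have h1 : ∀ u0 w0 : ℝ, (∫ p2 in Q0, f ((u0, w0), p2))
      = ∫ u1 in (0:ℝ)..1, ∫ w1 in (0:ℝ)..1, f ((u0, w0), (u1, w1)) := by
    intro u0 w0
    rw [show Q0 = Set.Ioo (0:ℝ) 1 ×ˢ Set.Ioo (0:ℝ) 1 from rfl,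
      my_setIntegral_prod _ (intOn_plane (g := fun p2 => f ((u0, w0), p2))
        (hf.comp (Continuous.prodMk_right (u0, w0))))]
    rw [ioo_eq_int]
    congr 1
    funext u1
    rw [ioo_eq_int]
  simp only [h1]
  rw [ioo_eq_int]
  congr 1
  funext u0
  rw [ioo_eq_int]


lemma int_sq (r : ℝ) : ∫ y in (0:ℝ)..1, (r-y)^2 = r^2 - r + 1/3 := by
  rw [intervalIntegral.integral_comp_sub_left (fun x => x^2) r, integral_pow]
  ring

lemma int_quart (r : ℝ) : ∫ y in (0:ℝ)..1, (r-y)^4 = r^4 - 2*r^3 + 2*r^2 - r + 1/5 := by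
  rw [intervalIntegral.integral_comp_sub_left (fun x => x^4) r, integral_pow]
  ring

lemma ii_sq (r : ℝ) : IntervalIntegrable (fun y => (r-y)^2) volume 0 1 :=
  (((continuous_const.sub continuous_id).pow 2)).intervalIntegrable 0 1

lemma ii_quart (r : ℝ) : IntervalIntegrable (fun y => (r-y)^4) volume 0 1 :=
  (((continuous_const.sub continuous_id).pow 4)).intervalIntegrable 0 1

-- innermost for sfun
lemma E1 (c r : ℝ) : ∫ y in (0:ℝ)..1, (c + (r-y)^2) = c + (r^2 - r + 1/3) := by
  rw [intervalIntegral.integral_add (intervalIntegrable_const (μ := volume) (c := c)) (ii_sq r),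
    intervalIntegral.integral_const, int_sq]
  simp

lemma E1' (c r : ℝ) : ∫ y in (0:ℝ)..1, ((r-y)^2 + c) = (r^2 - r + 1/3) + c := by
  rw [intervalIntegral.integral_add (ii_sq r) (intervalIntegrable_const (μ := volume) (c := c)),
    intervalIntegral.integral_const, int_sq]
  simp

lemma int_sfun : (∫ x in cube 2 Q0,
    (((x 0).1 - (x 1).1)^2 + ((x 0).2 - (x 1).2)^2)) = 1/3 := by
  have hf : Continuous fun p : Plane × Plane => (p.1.1 - p.2.1)^2 + (p.1.2 - p.2.2)^2 := by
    fun_prop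
  rw [show (fun x : Config 2 => (((x 0).1 - (x 1).1)^2 + ((x 0).2 - (x 1).2)^2))
    = (fun x : Config 2 => (fun p : Plane × Plane => (p.1.1 - p.2.1)^2 + (p.1.2 - p.2.2)^2)
        (x 0, x 1)) from rfl]
  rw [integral_cube_eq _ hf]
  simp only [E1]
  have h2 : ∀ u0 w0 : ℝ, (∫ u1 in (0:ℝ)..1, ((u0-u1)^2 + (w0^2 - w0 + 1/3)))
      = (u0^2 - u0 + 1/3) + (w0^2 - w0 + 1/3) := fun u0 w0 => E1' _ _
  simp only [h2]
  have h3 : ∀ u0 : ℝ, (∫ w0 in (0:ℝ)..1, ((u0^2 - u0 + 1/3) + (w0^2 - w0 + 1/3)))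
      = (u0^2 - u0 + 1/3) + 1/6 := by
    intro u0
    have : ∀ w0 : ℝ, (u0^2 - u0 + 1/3) + (w0^2 - w0 + 1/3) = ((u0^2-u0+1/3)+1/12) + (1/2-w0)^2 := by
      intro w0; ring
    simp only [this, E1]
    ring
  simp only [h3]
  have := E1' (1/6 : ℝ) (1/2 : ℝ)  -- handles u0 integral after rewriting
  have h4 : ∀ u0 : ℝ, (u0^2 - u0 + 1/3) + 1/6 = (1/2 - u0)^2 + (1/12 + 1/6) := by
    intro u0; ring
  simp only [h4]
  rw [E1']
  norm_num


lemma EQ (c d r : ℝ) : ∫ y in (0:ℝ)..1, (c + d*(r-y)^2 + (r-y)^4)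
    = c + d*(r^2-r+1/3) + (r^4-2*r^3+2*r^2-r+1/5) := by
  rw [intervalIntegral.integral_add (((intervalIntegrable_const (μ := volume) (c := c))).add
      ((ii_sq r).const_mul d)) (ii_quart r),
    intervalIntegral.integral_add (intervalIntegrable_const (μ := volume) (c := c))
      ((ii_sq r).const_mul d),
    intervalIntegral.integral_const_mul, int_sq, int_quart, intervalIntegral.integral_const]
  simp

lemma int_sfun_sq (ee : ℝ) : (∫ x in cube 2 Q0,
    ((((x 0).1 - (x 1).1)^2 + ((x 0).2 - (x 1).2)^2)^2 - ee)) = 17/90 - ee := by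
  have hf : Continuous fun p : Plane × Plane => ((p.1.1 - p.2.1)^2 + (p.1.2 - p.2.2)^2)^2 - ee := by
    fun_prop
  rw [show (fun x : Config 2 => ((((x 0).1 - (x 1).1)^2 + ((x 0).2 - (x 1).2)^2)^2 - ee))
    = (fun x : Config 2 => (fun p : Plane × Plane => ((p.1.1 - p.2.1)^2 + (p.1.2 - p.2.2)^2)^2 - ee)
        (x 0, x 1)) from rfl]
  rw [integral_cube_eq _ hf]
  have L1 : ∀ u0 w0 u1 : ℝ, (∫ w1 in (0:ℝ)..1, (((u0-u1)^2 + (w0-w1)^2)^2 - ee))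
      = (((u0-u1)^2)^2 - ee + 2*(u0-u1)^2*(w0^2-w0+1/3))
        + (w0^4-2*w0^3+2*w0^2-w0+1/5) := by
    intro u0 w0 u1
    rw [intervalIntegral.integral_congr
      (g := fun w1 => (((u0-u1)^2)^2 - ee) + (2*(u0-u1)^2)*(w0-w1)^2 + (w0-w1)^4)
      (fun w1 _ => by ring), EQ]
  simp only [L1]
  have L2 : ∀ u0 w0 : ℝ, (∫ u1 in (0:ℝ)..1,
      ((((u0-u1)^2)^2 - ee + 2*(u0-u1)^2*(w0^2-w0+1/3)) + (w0^4-2*w0^3+2*w0^2-w0+1/5)))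
      = ((w0^4-2*w0^3+2*w0^2-w0+1/5) - ee + 2*(w0^2-w0+1/3)*(u0^2-u0+1/3))
        + (u0^4-2*u0^3+2*u0^2-u0+1/5) := by
    intro u0 w0
    rw [intervalIntegral.integral_congr
      (g := fun u1 => ((w0^4-2*w0^3+2*w0^2-w0+1/5) - ee) + (2*(w0^2-w0+1/3))*(u0-u1)^2 + (u0-u1)^4)
      (fun u1 _ => by ring), EQ]
  simp only [L2]
  have L3 : ∀ u0 : ℝ, (∫ w0 in (0:ℝ)..1,
      (((w0^4-2*w0^3+2*w0^2-w0+1/5) - ee + 2*(w0^2-w0+1/3)*(u0^2-u0+1/3))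
        + (u0^4-2*u0^3+2*u0^2-u0+1/5)))
      = ((u0^4-2*u0^3+2*u0^2-u0+1/5) - ee + (1/80 + (2*(u0^2-u0+1/3) + 1/2)*(1/12) + 1/80))
        + 2*(u0^2-u0+1/3)*(1/12) := by
    intro u0
    rw [intervalIntegral.integral_congr
      (g := fun w0 => ((u0^4-2*u0^3+2*u0^2-u0+1/5) - ee + 1/80 + 2*(u0^2-u0+1/3)*(1/12))
          + (2*(u0^2-u0+1/3) + 1/2)*((1/2:ℝ)-w0)^2 + ((1/2:ℝ)-w0)^4)
      (fun w0 _ => by ring), EQ]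
    ring
  simp only [L3]
  have L4 : (∫ u0 in (0:ℝ)..1,
      ((u0^4-2*u0^3+2*u0^2-u0+1/5) - ee + (1/80 + (2*(u0^2-u0+1/3) + 1/2)*(1/12) + 1/80)
        + 2*(u0^2-u0+1/3)*(1/12)))
      = (77/720 - ee) + (5/6)*((1/2:ℝ)^2-(1/2:ℝ)+1/3)
        + ((1/2:ℝ)^4-2*(1/2:ℝ)^3+2*(1/2:ℝ)^2-(1/2:ℝ)+1/5) := by
    rw [intervalIntegral.integral_congr
      (g := fun u0 => (77/720 - ee)
        + (5/6)*((1/2:ℝ)-u0)^2 + ((1/2:ℝ)-u0)^4)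
      (fun u0 _ => by ring), EQ]
  rw [L4]
  ring

lemma eps_val : eps = 1/1000 := rfl

lemma DSq_le {α : ℝ} (hα : α ∈ Set.Icc (0:ℝ) 1) (j : Fin 2) (x : Config 2) :
    DSq 2 α j Psi0 x ≤ 5 * sfun x := by
  fin_cases j
  · exact DSq0_le hα x
  · exact DSq1_le hα x

lemma continuous_normPsi0sq : Continuous (fun x => ‖Psi0 x‖^2) :=
  (smooth_Psi0.continuous.norm).pow 2

lemma F_sq_ge {t : ℝ} (h0 : 0 ≤ t) (h2 : t ≤ 2) : t^2 - 8*eps ≤ (F t)^2 := by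
  rcases le_or_gt t (2*eps) with h | h
  · have : t^2 ≤ 4*eps^2 := by nlinarith [eps_pos]
    nlinarith [sq_nonneg (F t), eps_pos, eps_val]
  · have hge := F_ge h.le
    have hF0 : 0 ≤ F t := F_nonneg h0
    nlinarith [eps_pos]

lemma sfun_le_two {x : Config 2} (hx : x ∈ cube 2 Q0) : sfun x ≤ 2 := by
  have h0 := Set.mem_pi.mp hx 0 (Set.mem_univ _)
  have h1 := Set.mem_pi.mp hx 1 (Set.mem_univ _)
  obtain ⟨⟨a1, a2⟩, ⟨b1, b2⟩⟩ := h0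
  obtain ⟨⟨c1, c2⟩, ⟨d1, d2⟩⟩ := h1
  rw [show sfun x = ((x 0).1 - (x 1).1)^2 + ((x 0).2 - (x 1).2)^2 from rfl]
  nlinarith

lemma lower_ptwise (x : Config 2) (hx : x ∈ cube 2 Q0) : (sfun x)^2 - 8*eps ≤ ‖Psi0 x‖^2 := by
  have : ‖Psi0 x‖^2 = (F (sfun x))^2 := by
    rw [Psi0, Complex.norm_real, Real.norm_eq_abs, sq_abs]
  rw [this]
  exact F_sq_ge (sfun_nonneg x) (sfun_le_two hx)

lemma int_sfun' : (∫ x in cube 2 Q0, sfun x) = 1/3 := int_sfun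

lemma int_sfun_sq' (ee : ℝ) : (∫ x in cube 2 Q0, ((sfun x)^2 - ee)) = 17/90 - ee := int_sfun_sq ee

lemma measurableSet_cube : MeasurableSet (cube 2 Q0) :=
  MeasurableSet.univ_pi fun _ => (measurableSet_Ioo.prod measurableSet_Ioo)

lemma cube_subset_compact : cube 2 Q0 ⊆
    (Set.univ.pi fun _ : Fin 2 => (Set.Icc (0:ℝ) 1 ×ˢ Set.Icc (0:ℝ) 1)) := by
  refine Set.pi_mono fun i _ => ?_
  exact Set.prod_mono Set.Ioo_subset_Icc_self Set.Ioo_subset_Icc_self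

lemma isCompact_cubeK : IsCompact (Set.univ.pi fun _ : Fin 2 => (Set.Icc (0:ℝ) 1 ×ˢ Set.Icc (0:ℝ) 1)) :=
  isCompact_univ_pi fun _ => (isCompact_Icc.prod isCompact_Icc)

lemma intOn_cube {g : Config 2 → ℝ} (hg : Continuous g) : IntegrableOn g (cube 2 Q0) :=
  (hg.continuousOn.integrableOn_compact isCompact_cubeK).mono_set cube_subset_compact

lemma DSq_nonneg {N α} {j : Fin N} {Ψ : Config N → ℂ} {x : Config N} : 0 ≤ DSq N α j Ψ x :=
  add_nonneg (pow_nonneg (norm_nonneg _) 2) (pow_nonneg (norm_nonneg _) 2)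

lemma int_DSq_le {α : ℝ} (hα : α ∈ Set.Icc (0:ℝ) 1) (j : Fin 2) :
    (∫ x in cube 2 Q0, DSq 2 α j Psi0 x) ≤ 5/3 := by
  have h5 : IntegrableOn (fun x => 5 * sfun x) (cube 2 Q0) :=
    intOn_cube (continuous_const.mul continuous_sfun)
  have hval : (∫ x in cube 2 Q0, 5 * sfun x) = 5/3 := by
    rw [MeasureTheory.integral_const_mul, int_sfun']; norm_num
  by_cases h : IntegrableOn (fun x => DSq 2 α j Psi0 x) (cube 2 Q0)
  · calc (∫ x in cube 2 Q0, DSq 2 α j Psi0 x) ≤ ∫ x in cube 2 Q0, 5 * sfun x :=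
        setIntegral_mono_on h h5 measurableSet_cube (fun x _ => DSq_le hα j x)
      _ = 5/3 := hval
  · rw [MeasureTheory.integral_undef h]
    rw [← hval]
    exact setIntegral_nonneg measurableSet_cube fun x _ =>
      mul_nonneg (by norm_num) (sfun_nonneg x)


lemma kinE_Psi0_le {α : ℝ} (hα : α ∈ Set.Icc (0:ℝ) 1) : kinE 2 α Q0 Psi0 ≤ 10/3 := by
  rw [kinE, Fin.sum_univ_two]
  linarith [int_DSq_le hα 0, int_DSq_le hα 1]

lemma normSq_Psi0_ge : 17/90 - 8*eps ≤ normSq 2 Q0 Psi0 := by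
  rw [normSq]
  have hlow : IntegrableOn (fun x => (sfun x)^2 - 8*eps) (cube 2 Q0) :=
    intOn_cube ((continuous_sfun.pow 2).sub continuous_const)
  have hup : IntegrableOn (fun x => ‖Psi0 x‖^2) (cube 2 Q0) :=
    intOn_cube continuous_normPsi0sq
  calc (17/90 - 8*eps : ℝ) = ∫ x in cube 2 Q0, ((sfun x)^2 - 8*eps) := (int_sfun_sq' _).symm
    _ ≤ ∫ x in cube 2 Q0, ‖Psi0 x‖^2 :=
      setIntegral_mono_on hlow hup measurableSet_cube lower_ptwise

lemma normSq_Psi0_pos : 0 < normSq 2 Q0 Psi0 := by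
  have := normSq_Psi0_ge
  rw [eps_val] at this
  linarith

-- the normalized trial state
noncomputable def cnorm : ℝ := (Real.sqrt (normSq 2 Q0 Psi0))⁻¹
noncomputable def Psi : Config 2 → ℂ := fun x => (cnorm : ℂ) * Psi0 x

lemma cnorm_sq : cnorm^2 * normSq 2 Q0 Psi0 = 1 := by
  rw [cnorm, inv_pow, Real.sq_sqrt normSq_Psi0_pos.le]
  exact inv_mul_cancel₀ normSq_Psi0_pos.ne'

lemma Psi_admissible : Admissible 2 Psi := by
  obtain ⟨hs, hsym, U, hU, hdU, hvan⟩ := Psi0_admissible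
  exact ⟨contDiff_const.mul hs,
    fun σ x => by rw [Psi, Psi, hsym],
    ⟨U, hU, hdU, fun x hx => by rw [Psi, hvan x hx, mul_zero]⟩⟩

lemma norm_mul_sq (z : ℂ) : ‖(cnorm : ℂ) * z‖^2 = cnorm^2 * ‖z‖^2 := by
  rw [norm_mul, mul_pow, Complex.norm_real, Real.norm_eq_abs, sq_abs]

lemma normSq_Psi : normSq 2 Q0 Psi = 1 := by
  have : ∀ x, ‖Psi x‖^2 = cnorm^2 * ‖Psi0 x‖^2 := fun x => norm_mul_sq _
  rw [normSq]
  simp only [this]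
  rw [MeasureTheory.integral_const_mul]
  exact cnorm_sq

lemma pder_Psi (j : Fin 2) (v : Plane) (x : Config 2) :
    pder 2 j v Psi x = (cnorm : ℂ) * pder 2 j v Psi0 x := by
  rw [pder, pder, show Psi = fun y => (cnorm:ℂ) * Psi0 y from rfl,
    fderiv_const_mul (smooth_Psi0.differentiable (by norm_num) x)]
  simp

lemma DSq_Psi {α : ℝ} (j : Fin 2) (x : Config 2) :
    DSq 2 α j Psi x = cnorm^2 * DSq 2 α j Psi0 x := by
  rw [DSq, DSq, DOp, DOp, pder_Psi, pder_Psi]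
  rw [show Psi x = (cnorm:ℂ) * Psi0 x from rfl]
  rw [show -Complex.I * ((cnorm:ℂ) * pder 2 j (1,0) Psi0 x)
      + (↑(α * (abPot 2 j x).1)) * ((cnorm:ℂ) * Psi0 x)
      = (cnorm:ℂ) * (-Complex.I * pder 2 j (1,0) Psi0 x
        + (↑(α * (abPot 2 j x).1)) * Psi0 x) from by ring]
  rw [show -Complex.I * ((cnorm:ℂ) * pder 2 j (0,1) Psi0 x)
      + (↑(α * (abPot 2 j x).2)) * ((cnorm:ℂ) * Psi0 x)
      = (cnorm:ℂ) * (-Complex.I * pder 2 j (0,1) Psi0 x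
        + (↑(α * (abPot 2 j x).2)) * Psi0 x) from by ring]
  rw [norm_mul_sq, norm_mul_sq]
  ring

lemma kinE_Psi {α : ℝ} : kinE 2 α Q0 Psi = cnorm^2 * kinE 2 α Q0 Psi0 := by
  rw [kinE, kinE, Fin.sum_univ_two, Fin.sum_univ_two]
  simp only [DSq_Psi]
  rw [MeasureTheory.integral_const_mul, MeasureTheory.integral_const_mul]
  ring

theorem main {α : ℝ} (hα : α ∈ Set.Icc (0:ℝ) 1) : EN 2 α ≤ 2 * π^2 := by
  rw [EN, neumannE]
  norm_num
  have hmem : kinE 2 α Q0 Psi ∈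
      {E | ∃ Ψ : Config 2 → ℂ, Admissible 2 Ψ ∧ normSq 2 Q0 Ψ = 1 ∧ E = kinE 2 α Q0 Ψ} :=
    ⟨Psi, Psi_admissible, normSq_Psi, rfl⟩
  have hbdd : BddBelow {E | ∃ Ψ : Config 2 → ℂ, Admissible 2 Ψ ∧ normSq 2 Q0 Ψ = 1 ∧ E = kinE 2 α Q0 Ψ} := by
    refine ⟨0, fun E hE => ?_⟩
    obtain ⟨Ψ, _, _, rfl⟩ := hE
    exact Finset.sum_nonneg fun j _ =>
      setIntegral_nonneg measurableSet_cube fun x _ => DSq_nonneg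
  refine le_trans (csInf_le hbdd hmem) ?_
  have h1 : kinE 2 α Q0 Psi ≤ cnorm^2 * (10/3) := by
    rw [kinE_Psi]
    exact mul_le_mul_of_nonneg_left (kinE_Psi0_le hα) (sq_nonneg _)
  have h2 : (2 * π^2) * (cnorm^2 * normSq 2 Q0 Psi0) = 2 * π^2 := by
    rw [cnorm_sq, mul_one]
  have h3 : cnorm^2 * (10/3) ≤ (2*π^2) * (cnorm^2 * (17/90 - 8*eps)) := by
    have hpi : (3.141592 : ℝ) < π := Real.pi_gt_d6
    have heps : (17/90 - 8*eps : ℝ) = 407/2250 := by rw [eps_val]; norm_num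
    rw [heps]
    have hc2 : (0:ℝ) ≤ cnorm^2 := sq_nonneg _
    nlinarith [sq_nonneg (π - 3.141592)]
  have hpos : (0:ℝ) < 2 * π^2 := by positivity
  have h4 : (2*π^2) * (cnorm^2 * (17/90 - 8*eps)) ≤ 2 * π^2 :=
    le_trans (mul_le_mul_of_nonneg_left
      (mul_le_mul_of_nonneg_left normSq_Psi0_ge (sq_nonneg _)) hpos.le) (le_of_eq h2)
  exact le_trans h1 (le_trans h3 h4)

end AnyonProof

/-- for every `α ∈ [0,1]`, the two-anyon Neumann energy on the unit square
satisfies `E^N_2(α) ≤ 2π²`. -/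
theorem two_anyon_neumann_upper_bound (α : ℝ) (hα : α ∈ Set.Icc (0 : ℝ) 1) :
    EN 2 α ≤ 2 * π ^ 2 := by
  exact AnyonProof.main hα
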